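/- (Contrapositive form of Proposition 2, inward-moving case.) Let x ∈ M, let U be an open neighborhood of x, and let N₁, …, N_m ∈ ℝ³ be linearly independent vectors such that M ∩ U = (⋂_{i=1}^m {y ∈ ℝ³ : ⟨N_i, y − x⟩ ≤ 0}) ∩ U. Assume A and b are continuous on ℝ and differentiable at t' ∈ I, and set v = γ_x'(t'). If t₀ < t' ≤ t₁ and ⟨A(t')·N_i, v⟩ < 0 for every i = 1, …, m, then γ_x(t') lies in the interior of the swept volume V = ⋃_{t∈I} M(t); in particular γ_x(t') is not on the envelope E. -/

import Mathlib

open RealInnerProductSpace Matrix Filter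

/-- The action of a matrix on a point of `ℝ³ = EuclideanSpace ℝ (Fin 3)`. -/
noncomputable def act (A : Matrix (Fin 3) (Fin 3) ℝ) (x : EuclideanSpace ℝ (Fin 3)) :
    EuclideanSpace ℝ (Fin 3) := Matrix.toEuclideanLin A x

lemma act_apply (A : Matrix (Fin 3) (Fin 3) ℝ) (x : EuclideanSpace ℝ (Fin 3)) (j : Fin 3) :
    act A x j = ∑ k, A j k * x k := by
  simp [act, Matrix.toEuclideanLin_apply, Matrix.mulVec, dotProduct]

lemma act_mul (A B : Matrix (Fin 3) (Fin 3) ℝ) (x : EuclideanSpace ℝ (Fin 3)) :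
    act (A * B) x = act A (act B x) := by
  simp [act, Matrix.toEuclideanLin_apply, Matrix.mulVec_mulVec]

lemma act_one (x : EuclideanSpace ℝ (Fin 3)) : act 1 x = x := by
  simp [act, Matrix.toEuclideanLin_apply]

lemma act_sub (A : Matrix (Fin 3) (Fin 3) ℝ) (x y : EuclideanSpace ℝ (Fin 3)) :
    act A (x - y) = act A x - act A y := by
  simp [act]

lemma inner_act_transpose (A : Matrix (Fin 3) (Fin 3) ℝ) (u w : EuclideanSpace ℝ (Fin 3)) :
    ⟪act Aᵀ u, w⟫ = ⟪u, act A w⟫ := by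
  rw [show Aᵀ = Aᴴ from (A.conjTranspose_eq_transpose_of_trivial).symm]
  rw [act, act, Matrix.toEuclideanLin_conjTranspose_eq_adjoint, LinearMap.adjoint_inner_left]

lemma continuous_act {A : ℝ → Matrix (Fin 3) (Fin 3) ℝ} {w : ℝ → EuclideanSpace ℝ (Fin 3)}
    (hA : Continuous A) (hw : Continuous w) : Continuous fun t => act (A t) (w t) := by
  have h1 : Continuous fun t => (fun j => ∑ k, A t j k * w t k : Fin 3 → ℝ) := by
    refine continuous_pi fun j => continuous_finset_sum _ fun k _ => Continuous.mul ?_ ?_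
    · exact (continuous_apply k).comp ((continuous_apply j).comp hA)
    · exact ((continuous_apply k).comp ((PiLp.continuous_ofLp _ _).comp hw))
  have h2 : (fun t => act (A t) (w t)) =
      (WithLp.equiv 2 (Fin 3 → ℝ)).symm ∘ fun t => (fun j => ∑ k, A t j k * w t k : Fin 3 → ℝ) := by
    funext t; ext j
    simp [act_apply]
  rw [h2]
  exact (PiLp.continuous_toLp _ _).comp h1

lemma eventually_neg_left {f : ℝ → ℝ} {c t' : ℝ} (hf : HasDerivAt f c t') (h0 : f t' = 0)
    (hc : 0 < c) : ∀ᶠ t in nhdsWithin t' (Set.Iio t'), f t < 0 := by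
  have hslope := hasDerivAt_iff_tendsto_slope.mp hf
  have h1 : ∀ᶠ t in nhdsWithin t' {t'}ᶜ, 0 < slope f t' t :=
    hslope.eventually (eventually_gt_nhds hc)
  have h2 : nhdsWithin t' (Set.Iio t') ≤ nhdsWithin t' {t'}ᶜ :=
    nhdsWithin_mono _ (fun y hy => ne_of_lt hy)
  filter_upwards [h2 h1, self_mem_nhdsWithin] with t hs (htlt : t < t')
  rw [slope_def_field, h0, sub_zero] at hs
  rcases div_pos_iff.mp hs with ⟨_, h⟩ | ⟨h, _⟩
  · linarith [sub_neg.mpr htlt]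
  · linarith

/-- Contrapositive form of Proposition 2, inward-moving case: if near `x ∈ M` the solid
is the intersection of `m` half-spaces with linearly independent outward normals `N i`,
`t₀ < t' ≤ t₁` and `⟪A(t')·N i, γ_x'(t')⟫ < 0` for every `i`, then `γ_x(t')` lies in the
interior of the swept volume; in particular it is not on the envelope. -/
theorem interior_of_sweep_of_inward_moving
    (A : ℝ → Matrix (Fin 3) (Fin 3) ℝ) (b : ℝ → EuclideanSpace ℝ (Fin 3))
    (hA : ∀ t, (A t)ᵀ * A t = 1)
    (hAcont : Continuous A) (hbcont : Continuous b)
    (M : Set (EuclideanSpace ℝ (Fin 3)))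
    (t₀ t₁ : ℝ) (ht : t₀ < t₁)
    (x : EuclideanSpace ℝ (Fin 3)) (hxM : x ∈ M)
    (U : Set (EuclideanSpace ℝ (Fin 3))) (hU : IsOpen U) (hxU : x ∈ U)
    (m : ℕ) (N : Fin m → EuclideanSpace ℝ (Fin 3)) (hNli : LinearIndependent ℝ N)
    (hMU : M ∩ U = (⋂ i, {y : EuclideanSpace ℝ (Fin 3) | ⟪N i, y - x⟫ ≤ 0}) ∩ U)
    (t' : ℝ) (ht'₀ : t₀ < t') (ht'₁ : t' ≤ t₁)
    (hAdiff : ∀ i j, DifferentiableAt ℝ (fun t => A t i j) t')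
    (hbdiff : DifferentiableAt ℝ b t')
    (v : EuclideanSpace ℝ (Fin 3))
    (hv : HasDerivAt (fun t => act (A t) x + b t) v t')
    (hin : ∀ i, ⟪act (A t') (N i), v⟫ < 0) :
    act (A t') x + b t' ∈
        interior (⋃ t ∈ Set.Icc t₀ t₁, (fun y => act (A t) y + b t) '' M) ∧
      act (A t') x + b t' ∉
        frontier (⋃ t ∈ Set.Icc t₀ t₁, (fun y => act (A t) y + b t) '' M) := by
  classical
  set γ : ℝ → EuclideanSpace ℝ (Fin 3) := fun t => act (A t) x + b t with hγ
  set p : EuclideanSpace ℝ (Fin 3) := γ t' with hp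
  have hAA' : ∀ t, A t * (A t)ᵀ = 1 := fun t => mul_eq_one_comm.mp (hA t)
  -- the moving preimage of p
  set z : ℝ → EuclideanSpace ℝ (Fin 3) := fun t => act (A t)ᵀ (p - b t) with hz
  have hzt' : z t' = x := by
    have : p - b t' = act (A t') x := by simp [hp, hγ]
    rw [hz]; simp only [this]
    rw [← act_mul, hA, act_one]
  -- z is continuous
  have hzcont : Continuous z :=
    continuous_act (continuous_pi fun i => continuous_pi fun j =>
      (continuous_apply i).comp ((continuous_apply j).comp hAcont))
      (continuous_const.sub hbcont)
  -- key inner-product identity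
  have hkey : ∀ t i, ⟪N i, z t - x⟫ = ⟪act (A t) (N i), p - γ t⟫ := by
    intro t i
    have h1 : ⟪act (A t) (N i), p - γ t⟫ = ⟪N i, act (A t)ᵀ (p - γ t)⟫ := by
      rw [← inner_act_transpose ((A t)ᵀ), Matrix.transpose_transpose]
    rw [h1]
    congr 1
    have : p - γ t = (p - b t) - act (A t) x := by
      rw [hγ]; beta_reduce; abel
    rw [this, act_sub, ← act_mul, hA, act_one, hz]
  -- the functions h i and their derivatives
  have hFdiff : ∀ i, DifferentiableAt ℝ (fun t => act (A t) (N i)) t' := by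
    intro i
    rw [differentiableAt_euclidean]
    intro j
    have : (fun t => act (A t) (N i) j) = fun t => ∑ k, A t j k * N i k := by
      funext t; exact act_apply _ _ _
    rw [this]
    exact DifferentiableAt.fun_sum fun k _ => (hAdiff j k).mul_const _
  have hderiv : ∀ i, ∀ᶠ t in nhdsWithin t' (Set.Iio t'), ⟪act (A t) (N i), p - γ t⟫ < 0 := by
    intro i
    set F : ℝ → EuclideanSpace ℝ (Fin 3) := fun t => act (A t) (N i) with hF
    have hF' : HasDerivAt F (deriv F t') t' := (hFdiff i).hasDerivAt
    have hg : HasDerivAt (fun t => p - γ t) (-v) t' := hv.const_sub p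
    have hinner : HasDerivAt (fun t => ⟪F t, p - γ t⟫)
        (⟪F t', -v⟫ + ⟪deriv F t', p - γ t'⟫) t' := hF'.inner ℝ hg
    have h0 : (fun t => ⟪F t, p - γ t⟫) t' = 0 := by simp [hp]
    have hc : 0 < ⟪F t', -v⟫ + ⟪deriv F t', p - γ t'⟫ := by
      have : p - γ t' = 0 := by simp [hp]
      rw [this, inner_zero_right, add_zero, inner_neg_right]
      linarith [hin i]
    exact eventually_neg_left hinner h0 hc
  -- eventually z t ∈ U
  have hzU : ∀ᶠ t in nhdsWithin t' (Set.Iio t'), z t ∈ U := by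
    have : ∀ᶠ t in nhds t', z t ∈ U :=
      hzcont.continuousAt.eventually_mem (hU.mem_nhds (hzt' ▸ hxU))
    exact nhdsWithin_le_nhds this
  -- eventually t ∈ Ioo t₀ t'
  have hIoo : Set.Ioo t₀ t' ∈ nhdsWithin t' (Set.Iio t') :=
    Ioo_mem_nhdsLT_of_mem ⟨ht'₀, le_refl t'⟩
  -- combine and pick a witness t
  have hall : ∀ᶠ t in nhdsWithin t' (Set.Iio t'),
      (∀ i, ⟪N i, z t - x⟫ < 0) ∧ z t ∈ U ∧ t ∈ Set.Ioo t₀ t' := by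
    have h1 : ∀ᶠ t in nhdsWithin t' (Set.Iio t'), ∀ i, ⟪N i, z t - x⟫ < 0 := by
      rw [eventually_all]
      intro i
      filter_upwards [hderiv i] with t hti
      rw [hkey]; exact hti
    filter_upwards [h1, hzU, hIoo] with t a c d using ⟨a, c, d⟩
  obtain ⟨t, hti, htU, htIoo⟩ := hall.exists
  -- the open set W around z t inside M
  set W : Set (EuclideanSpace ℝ (Fin 3)) :=
    (⋂ i, {y : EuclideanSpace ℝ (Fin 3) | ⟪N i, y - x⟫ < 0}) ∩ U with hW
  have hWopen : IsOpen W := by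
    refine IsOpen.inter (isOpen_iInter_of_finite fun i => ?_) hU
    exact isOpen_lt (Continuous.inner continuous_const (continuous_id.sub continuous_const))
      continuous_const
  have hzW : z t ∈ W := ⟨Set.mem_iInter.mpr fun i => hti i, htU⟩
  have hWM : W ⊆ M := by
    intro y hy
    have : y ∈ (⋂ i, {y : EuclideanSpace ℝ (Fin 3) | ⟪N i, y - x⟫ ≤ 0}) ∩ U :=
      ⟨Set.mem_iInter.mpr fun i => le_of_lt (show ⟪N i, y - x⟫ < 0 from Set.mem_iInter.mp hy.1 i), hy.2⟩
    rw [← hMU] at this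
    exact this.1
  -- the rigid motion at time t and its inverse
  set φ : EuclideanSpace ℝ (Fin 3) → EuclideanSpace ℝ (Fin 3) := fun y => act (A t) y + b t
  set ψ : EuclideanSpace ℝ (Fin 3) → EuclideanSpace ℝ (Fin 3) := fun y => act (A t)ᵀ (y - b t)
  have hψcont : Continuous ψ := by
    have h1 : Continuous fun y : EuclideanSpace ℝ (Fin 3) => act (A t)ᵀ y :=
      (Matrix.toEuclideanLin ((A t)ᵀ)).continuous_of_finiteDimensional
    exact h1.comp (continuous_id.sub continuous_const)
  have hleft : Function.LeftInverse ψ φ := by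
    intro y
    show act (A t)ᵀ (act (A t) y + b t - b t) = y
    rw [add_sub_cancel_right, ← act_mul, hA, act_one]
  have hright : Function.RightInverse ψ φ := by
    intro y
    show act (A t) (act (A t)ᵀ (y - b t)) + b t = y
    rw [← act_mul, hAA', act_one, sub_add_cancel]
  have himg : φ '' W = ψ ⁻¹' W := congrFun (Set.image_eq_preimage_of_inverse hleft hright) W
  have hφWopen : IsOpen (φ '' W) := himg ▸ hWopen.preimage hψcont
  have hpφ : p = φ (z t) := by
    show p = act (A t) (act (A t)ᵀ (p - b t)) + b t
    rw [← act_mul, hAA', act_one, sub_add_cancel]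
  have hpmem : p ∈ φ '' W := hpφ ▸ Set.mem_image_of_mem φ hzW
  have hsub : φ '' W ⊆ ⋃ s ∈ Set.Icc t₀ t₁, (fun y => act (A s) y + b s) '' M := by
    rintro q ⟨y, hyW, rfl⟩
    exact Set.mem_biUnion ⟨le_of_lt htIoo.1, le_trans (le_of_lt htIoo.2) ht'₁⟩
      (Set.mem_image_of_mem _ (hWM hyW))
  have hint : p ∈ interior (⋃ s ∈ Set.Icc t₀ t₁, (fun y => act (A s) y + b s) '' M) :=
    interior_maximal hsub hφWopen hpmem
  exact ⟨hint, fun h => h.2 hint⟩
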